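/- Let R be an ordered commutative ring and (G,L) an R-network on a connected ∂-graph G with w(e) > 0 for all edges e and d(x) ≥ 0 for all vertices x. Suppose ∂V is nonempty. If u : V → R is a finitely supported harmonic function (Lu(x) = 0 for x ∈ V°) with u|_{∂V} = 0, then u = 0. -/

import Mathlib

open Finsupp

/-- A graph with boundary (`∂`-graph) together with a generalized Laplacian datum over `R`:
oriented edges with a fixed-point-free reversal involution, local finiteness,
a set of boundary vertices, symmetric edge weights `w` and diagonal perturbation `d`. -/
structure DNetwork (R : Type) [CommRing R] where
  V : Type
  E : Type
  src : E → V
  rev : E → E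
  rev_rev : ∀ e, rev (rev e) = e
  rev_ne : ∀ e, rev e ≠ e
  finE : ∀ x : V, Fintype {e : E // src e = x}
  boundary : Set V
  w : E → R
  w_rev : ∀ e, w (rev e) = w e
  d : V → R

namespace DNetwork

variable {R : Type} [CommRing R] (N : DNetwork R)

/-- The endpoint of an oriented edge. -/
def tgt (e : N.E) : N.V := N.src (N.rev e)

/-- The generalized Laplacian evaluated at the vertex `x`, as a linear functional on
`M`-valued functions: `Lu(x) = d(x) u(x) + ∑_{e : e₊ = x} w(e) (u(x) - u(e₋))`. -/
noncomputable def lapAt {M : Type} [AddCommGroup M] [Module R M] (x : N.V) :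
    (N.V → M) →ₗ[R] M :=
  letI := N.finE x
  N.d x • (LinearMap.proj x : (N.V → M) →ₗ[R] M) +
    ∑ e : {e : N.E // N.src e = x},
      N.w e.1 • ((LinearMap.proj x : (N.V → M) →ₗ[R] M) - LinearMap.proj (N.tgt e.1))

/-- The generalized Laplacian applied to the basis chain at the vertex `x`. -/
noncomputable def lapSingle (x : N.V) : N.V →₀ R :=
  letI := N.finE x
  N.d x • Finsupp.single x 1 +
    ∑ e : {e : N.E // N.src e = x},
      N.w e.1 • (Finsupp.single x 1 - Finsupp.single (N.tgt e.1) 1)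

/-- The generalized Laplacian as a linear endomorphism of the module `RV` of `0`-chains. -/
noncomputable def chainLap : (N.V →₀ R) →ₗ[R] (N.V →₀ R) :=
  Finsupp.lsum R fun x => LinearMap.toSpanSingleton R _ (N.lapSingle x)

/-- The set of interior vertices. -/
def interior : Set N.V := N.boundaryᶜ

/-- The submodule `L(RV°)` of `RV`. -/
noncomputable def lapImage : Submodule R (N.V →₀ R) :=
  Submodule.map N.chainLap (Finsupp.supported R R N.interior)

/-- The fundamental module `Υ(G,L) = RV / L(RV°)`. -/
abbrev Upsilon := (N.V →₀ R) ⧸ N.lapImage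

/-- The submodule of `M`-valued harmonic functions `U(G,L,M)`. -/
noncomputable def harmonic (M : Type) [AddCommGroup M] [Module R M] :
    Submodule R (N.V → M) :=
  ⨅ x ∈ N.interior, LinearMap.ker (N.lapAt (M := M) x)

/-- The module `U₀(G,L,M)` of finitely supported `M`-valued functions `u` with
`u = 0` on the boundary and `Lu ≡ 0` everywhere. -/
noncomputable def U0 (M : Type) [AddCommGroup M] [Module R M] :
    Submodule R (N.V →₀ M) :=
  (⨅ x ∈ N.boundary, LinearMap.ker (Finsupp.lapply (M := M) (R := R) x)) ⊓
    (⨅ x : N.V, LinearMap.ker ((N.lapAt (M := M) x).comp Finsupp.lcoeFun))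

/-- Adjacency via an oriented edge. -/
def Adj (x y : N.V) : Prop := ∃ e : N.E, N.src e = x ∧ N.tgt e = y

/-- Connectivity of the underlying graph. -/
def Connected : Prop := ∀ x y : N.V, Relation.ReflTransGen N.Adj x y

end DNetwork

/-- Auxiliary maximum principle: no positive values. -/
theorem aux_no_pos_value
    {R : Type} [CommRing R] [LinearOrder R] [IsStrictOrderedRing R] (N : DNetwork R)
    (hw : ∀ e : N.E, 0 < N.w e) (hd : ∀ x : N.V, 0 ≤ N.d x)
    (hconn : N.Connected) (hb : N.boundary.Nonempty)
    (u : N.V →₀ R)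
    (hbd : ∀ x ∈ N.boundary, u x = 0)
    (hharm : ∀ x ∈ N.interior, N.lapAt x ⇑u = 0) :
    ∀ x, u x ≤ 0 := by
  by_contra h
  push_neg at h
  obtain ⟨x₀, hx₀⟩ := h
  have hx₀s : x₀ ∈ u.support := Finsupp.mem_support_iff.2 (ne_of_gt hx₀)
  set s : Finset R := u.support.image ⇑u with hs
  have hsne : s.Nonempty := ⟨u x₀, Finset.mem_image_of_mem _ hx₀s⟩
  set M := s.max' hsne with hM
  have hMpos : 0 < M :=
    lt_of_lt_of_le hx₀ (Finset.le_max' s _ (Finset.mem_image_of_mem _ hx₀s))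
  have hle : ∀ y, u y ≤ M := by
    intro y
    by_cases hy : y ∈ u.support
    · exact Finset.le_max' s _ (Finset.mem_image_of_mem _ hy)
    · rw [Finsupp.notMem_support_iff.1 hy]; exact le_of_lt hMpos
  have step : ∀ y z, u y = M → N.Adj y z → u z = M := by
    rintro y z hy ⟨e, he, hez⟩
    have hyint : y ∈ N.interior := by
      intro hyb
      exact absurd (hbd y hyb) (by rw [hy]; exact ne_of_gt hMpos)
    have h0 := hharm y hyint
    letI := N.finE y
    have hexp : N.d y * u y +
        ∑ e' : {e' : N.E // N.src e' = y}, N.w e'.1 * (u y - u (N.tgt e'.1)) = 0 := by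
      simpa [DNetwork.lapAt, LinearMap.sum_apply, smul_eq_mul] using h0
    have hterm : ∀ e' : {e' : N.E // N.src e' = y},
        0 ≤ N.w e'.1 * (u y - u (N.tgt e'.1)) := by
      intro e'
      apply mul_nonneg (le_of_lt (hw e'.1))
      rw [hy]; exact sub_nonneg.2 (hle _)
    have hsum_nonneg : 0 ≤ ∑ e' : {e' : N.E // N.src e' = y},
        N.w e'.1 * (u y - u (N.tgt e'.1)) := Finset.sum_nonneg fun e' _ => hterm e'
    have hd_nonneg : 0 ≤ N.d y * u y := by
      apply mul_nonneg (hd y); rw [hy]; exact le_of_lt hMpos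
    have hsum0 : ∑ e' : {e' : N.E // N.src e' = y},
        N.w e'.1 * (u y - u (N.tgt e'.1)) = 0 := le_antisymm (by linarith) hsum_nonneg
    have heach := (Finset.sum_eq_zero_iff_of_nonneg fun e' _ => hterm e').1 hsum0
    have hthis := heach ⟨e, he⟩ (Finset.mem_univ _)
    have : u y - u (N.tgt e) = 0 := by
      rcases mul_eq_zero.1 hthis with h' | h'
      · exact absurd h' (ne_of_gt (hw e))
      · exact h'
    rw [← hez, ← hy]
    linarith [this]
  obtain ⟨xm, hxm, hxmM⟩ := Finset.mem_image.1 (s.max'_mem hsne)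
  have hall : ∀ z, Relation.ReflTransGen N.Adj xm z → u z = M := by
    intro z hz
    induction hz with
    | refl => exact hxmM
    | tail _ hadj ih => exact step _ _ ih hadj
  obtain ⟨b, hbB⟩ := hb
  have hbM := hall b (hconn xm b)
  rw [hbd b hbB] at hbM
  exact absurd hbM.symm (ne_of_gt hMpos)

/-- over an ordered commutative ring, with positive edge weights, nonnegative
diagonal, connected graph and nonempty boundary, a finitely supported harmonic function
vanishing on the boundary vanishes identically. -/
theorem finsupp_harmonic_vanishing_boundary_eq_zero
    {R : Type} [CommRing R] [LinearOrder R] [IsStrictOrderedRing R] (N : DNetwork R)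
    (hw : ∀ e : N.E, 0 < N.w e) (hd : ∀ x : N.V, 0 ≤ N.d x)
    (hconn : N.Connected) (hb : N.boundary.Nonempty)
    (u : N.V →₀ R)
    (hbd : ∀ x ∈ N.boundary, u x = 0)
    (hharm : ∀ x ∈ N.interior, N.lapAt x ⇑u = 0) :
    u = 0 := by
  have h1 := aux_no_pos_value N hw hd hconn hb u hbd hharm
  have h2 := aux_no_pos_value N hw hd hconn hb (-u)
    (fun x hx => by simp [hbd x hx])
    (fun x hx => by
      have : (⇑(-u) : N.V → R) = -⇑u := Finsupp.coe_neg u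
      rw [this, map_neg, hharm x hx, neg_zero])
  ext x
  have := h2 x
  simp only [Finsupp.coe_neg, Pi.neg_apply, neg_nonpos] at this
  exact le_antisymm (h1 x) this
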